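/- The generating function M^b(z) = Σ m^b_n z^n of the Grand Motzkin numbers (central trinomial coefficients) satisfies M^b(z) = 1/(1 − z − 2z^2·M(z)) in the sense that (1 − z − 2z^2·M(z))·M^b(z) = 1 as formal power series, where M(z) is the Motzkin generating function. -/

import Mathlib

open PowerSeries Polynomial

/-- The `n`-th Grand Motzkin number: the coefficient of `x^n` in `(1+x+x^2)^n`. -/
noncomputable def grandMotzkin (n : ℕ) : ℤ :=
  ((1 + Polynomial.X + Polynomial.X ^ 2 : Polynomial ℤ) ^ n).coeff n

namespace GrandMotzkinAux

noncomputable def f : Polynomial ℤ := 1 + Polynomial.X + Polynomial.X ^ 2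

lemma natDegree_f : f.natDegree = 2 := by unfold f; compute_degree!

lemma reverse_f : f.reverse = f := by
  ext k
  rw [Polynomial.coeff_reverse, natDegree_f]
  match k with
  | 0 => rw [Polynomial.revAt_le (by norm_num)]; simp [f, Polynomial.coeff_one, Polynomial.coeff_X]
  | 1 => rw [Polynomial.revAt_le (by norm_num)]
  | 2 => rw [Polynomial.revAt_le (by norm_num)]; simp [f, Polynomial.coeff_one, Polynomial.coeff_X]
  | (k+3) => show f.coeff (if k + 3 ≤ 2 then 2 - (k + 3) else k + 3) = f.coeff (k + 3); rw [if_neg (by omega)]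

lemma reverse_f_pow (n : ℕ) : (f ^ n).reverse = f ^ n := by
  induction n with
  | zero => simpa using Polynomial.reverse_C (1:ℤ)
  | succ m ih => rw [pow_succ, Polynomial.reverse_mul_of_domain, ih, reverse_f]

lemma symm_f (m : ℕ) : ((f:Polynomial ℤ)^(m+1)).coeff (m+2) = (f^(m+1)).coeff m := by
  conv_lhs => rw [← reverse_f_pow]
  rw [Polynomial.coeff_reverse, Polynomial.natDegree_pow, natDegree_f, Polynomial.revAt_le (by omega)]
  congr 1
  omega

lemma pascal (n k : ℕ) :
    (f^(n+1)).coeff (k+2) = (f^n).coeff (k+2) + (f^n).coeff (k+1) + (f^n).coeff k := by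
  have h : f^(n+1) = f^n + Polynomial.X * f^n + Polynomial.X * (Polynomial.X * f^n) := by
    rw [pow_succ]; unfold f; ring
  rw [h]
  simp [Polynomial.coeff_add, Polynomial.coeff_X_mul]

lemma deriv_f (n j : ℕ) :
    ((j:ℤ)+2) * (f^(n+1)).coeff (j+2)
      = ((n:ℤ)+1) * ((f^n).coeff (j+1) + 2 * (f^n).coeff j) := by
  have hd : Polynomial.derivative (f^(n+1)) = Polynomial.C ((n:ℤ)+1) * f^n + (Polynomial.X * (Polynomial.C ((n:ℤ)+1) * f^n)
      + Polynomial.X * (Polynomial.C ((n:ℤ)+1) * f^n)) := by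
    have hdf : Polynomial.derivative f = 1 + 2 * Polynomial.X := by
      unfold f
      simp
    rw [Polynomial.derivative_pow, hdf, Nat.add_sub_cancel]
    push_cast
    ring
  have h := congrArg (fun p => p.coeff (j+1)) hd
  simp only [Polynomial.coeff_derivative, Polynomial.coeff_add, Polynomial.coeff_X_mul, Polynomial.coeff_C_mul] at h
  push_cast at h
  linarith

lemma hI (m : ℕ) : (f^(m+2)).coeff (m+2) = (f^(m+1)).coeff (m+1) + 2 * (f^(m+1)).coeff m := by
  have h := pascal (m+1) m
  rw [symm_f m] at h
  linarith

lemma hII (m : ℕ) : ((m:ℤ)+3) * (f^(m+2)).coeff (m+1)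
    = ((m:ℤ)+2) * ((f^(m+1)).coeff m + 2 * (f^(m+1)).coeff (m+1)) := by
  have h := deriv_f (m+1) (m+1)
  rw [symm_f (m+1), symm_f m] at h
  push_cast at h
  linarith

lemma c00 : ((f:Polynomial ℤ)^0).coeff 0 = 1 := by simp
lemma c10 : ((f:Polynomial ℤ)^1).coeff 0 = 1 := by simp [f]
lemma c11 : ((f:Polynomial ℤ)^1).coeff 1 = 1 := by simp [f, Polynomial.coeff_one]

lemma trec (m : ℕ) : ((m:ℤ)+2) * (f^(m+2)).coeff (m+2)
    = (2*(m:ℤ)+3) * (f^(m+1)).coeff (m+1) + 3*((m:ℤ)+1) * (f^m).coeff m := by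
  match m with
  | 0 =>
    have h0 := hI 0
    rw [c11, c10] at h0
    rw [c00, c11]
    norm_num
    linarith
  | (k+1) =>
    have h1 := hI (k+1)
    have h2 := hI k
    have h3 := hII k
    push_cast
    linear_combination ((k:ℤ)+3) * h1 - ((k:ℤ)+2) * h2 + 2 * h3

lemma trec' (m : ℕ) : ((m:ℤ)+2) * grandMotzkin (m+2)
    = (2*(m:ℤ)+3) * grandMotzkin (m+1) + 3*((m:ℤ)+1) * grandMotzkin m := trec m

lemma gm0 : grandMotzkin 0 = 1 := c00
lemma gm1 : grandMotzkin 1 = 1 := c11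

end GrandMotzkinAux

/-- The Grand Motzkin generating function `M^b(z)` satisfies
`(1 − z − 2z^2·M(z))·M^b(z) = 1`, where `M(z)` is the Motzkin generating function,
i.e. the unique formal power series with `M = 1 + z·M + z^2·M^2`. -/
theorem grandMotzkin_gf_eq (M : PowerSeries ℚ)
    (hM : M = 1 + PowerSeries.X * M + PowerSeries.X ^ 2 * M ^ 2) :
    let Mb : PowerSeries ℚ := PowerSeries.mk fun n => (grandMotzkin n : ℚ)
    (1 - PowerSeries.X - 2 * PowerSeries.X ^ 2 * M) * Mb = 1 := by
  intro Mb
  set A : PowerSeries ℚ := 1 - PowerSeries.X - 2 * PowerSeries.X ^ 2 * M with hA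
  have hA0 : PowerSeries.constantCoeff A ≠ 0 := by
    rw [hA]; simp
  set T : PowerSeries ℚ := A⁻¹ with hTdef
  have hT : A * T = 1 := PowerSeries.mul_inv_cancel A hA0
  have hsq : PowerSeries.X ^ 2 * M ^ 2 = M - 1 - PowerSeries.X * M := by
    linear_combination -hM
  have hA2 : A ^ 2 = 1 - 2 * PowerSeries.X - 3 * PowerSeries.X ^ 2 := by
    rw [hA]; linear_combination (4 * PowerSeries.X ^ 2 : PowerSeries ℚ) * hsq
  have hD1 : A * d⁄dX ℚ T + T * d⁄dX ℚ A = 0 := by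
    have h := congrArg (d⁄dX ℚ) hT
    rw [Derivation.leibniz, Derivation.map_one_eq_zero] at h
    simpa [smul_eq_mul] using h
  have htwo : (2 : PowerSeries ℚ) ≠ 0 := by
    intro h
    have := congrArg (PowerSeries.constantCoeff) h
    rw [map_ofNat, map_zero] at this
    norm_num at this
  have hD2 : A * d⁄dX ℚ A = -1 - 3 * PowerSeries.X := by
    have h := congrArg (d⁄dX ℚ) hA2
    have e1 : A ^ 2 = A * A := by ring
    have e2 : (1 - 2 * PowerSeries.X - 3 * PowerSeries.X ^ 2 : PowerSeries ℚ)
        = 1 - (PowerSeries.X + PowerSeries.X)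
          - (PowerSeries.X * PowerSeries.X + PowerSeries.X * PowerSeries.X
            + PowerSeries.X * PowerSeries.X) := by ring
    rw [e1, e2] at h
    simp only [Derivation.leibniz, Derivation.map_one_eq_zero, map_add, map_sub,
      PowerSeries.derivative_X, smul_eq_mul, mul_one] at h
    apply mul_left_cancel₀ htwo
    linear_combination h
  have hPT : (1 - 2 * PowerSeries.X - 3 * PowerSeries.X ^ 2) * d⁄dX ℚ T
      = (1 + 3 * PowerSeries.X) * T := by
    linear_combination (-(d⁄dX ℚ T)) * hA2 + hD1 * A - T * hD2
  have hPT2 : d⁄dX ℚ T = (PowerSeries.X * d⁄dX ℚ T + PowerSeries.X * d⁄dX ℚ T)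
      + (PowerSeries.X * (PowerSeries.X * d⁄dX ℚ T)
        + PowerSeries.X * (PowerSeries.X * d⁄dX ℚ T)
        + PowerSeries.X * (PowerSeries.X * d⁄dX ℚ T))
      + T + (PowerSeries.X * T + PowerSeries.X * T + PowerSeries.X * T) := by
    linear_combination hPT
  -- base values of T
  have ha0 : PowerSeries.coeff 0 T = 1 := by
    have h := congrArg (PowerSeries.coeff 0) hT
    simp only [PowerSeries.coeff_zero_eq_constantCoeff, map_mul] at h
    rw [PowerSeries.coeff_zero_eq_constantCoeff]
    have hA1 : PowerSeries.constantCoeff A = 1 := by rw [hA]; simp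
    rw [hA1, one_mul] at h
    simpa using h
  have ha1 : PowerSeries.coeff 1 T = 1 := by
    have h := congrArg (PowerSeries.coeff 0) hPT2
    simp only [map_add, PowerSeries.coeff_zero_eq_constantCoeff, map_mul,
      PowerSeries.constantCoeff_X, zero_mul, PowerSeries.coeff_derivative] at h
    rw [← PowerSeries.coeff_zero_eq_constantCoeff] at h
    rw [ha0] at h
    push_cast at h
    linarith [h]
  have key : ∀ m : ℕ, ((m:ℚ)+2) * PowerSeries.coeff (m+2) T
      = (2*(m:ℚ)+3) * PowerSeries.coeff (m+1) T + 3*((m:ℚ)+1) * PowerSeries.coeff m T := by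
    intro m
    rcases m with _ | j
    · have h := congrArg (PowerSeries.coeff 1) hPT2
      simp only [map_add, PowerSeries.coeff_succ_X_mul, PowerSeries.coeff_derivative,
        PowerSeries.coeff_zero_eq_constantCoeff, map_mul, PowerSeries.constantCoeff_X,
        zero_mul, mul_zero] at h
      push_cast at h
      norm_num
      linarith
    · have h := congrArg (PowerSeries.coeff (j+1+1)) hPT2
      simp only [map_add, PowerSeries.coeff_succ_X_mul, PowerSeries.coeff_derivative] at h
      push_cast at h
      push_cast
      linarith
  have hcoe : ∀ n : ℕ, (grandMotzkin n : ℚ) = PowerSeries.coeff n T := by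
    intro n
    induction n using Nat.strong_induction_on with
    | _ n ih =>
      match n, ih with
      | 0, _ => rw [ha0, GrandMotzkinAux.gm0]; norm_num
      | 1, _ => rw [ha1, GrandMotzkinAux.gm1]; norm_num
      | (m+2), ih =>
        have k1 := key m
        have k2 := congrArg (fun z : ℤ => (z : ℚ)) (GrandMotzkinAux.trec' m)
        push_cast at k2
        have e1 := ih (m+1) (by omega)
        have e0 := ih m (by omega)
        have hne : ((m:ℚ)+2) ≠ 0 := by positivity
        apply mul_left_cancel₀ hne
        rw [k1]
        linear_combination k2 + (2*(m:ℚ)+3) * e1 + (3*((m:ℚ)+1)) * e0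
  have hMb : Mb = T := by
    apply PowerSeries.ext
    intro n
    show PowerSeries.coeff n (PowerSeries.mk fun k => (grandMotzkin k : ℚ))
        = PowerSeries.coeff n T
    rw [PowerSeries.coeff_mk]
    exact hcoe n
  rw [hMb]
  exact hT
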